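/- Let F : ℂ × ℂ × ℂ → ℂ be a function, written F(x,y;α). Say that the three-leg relation holds on a quadrilateral (v0,v1,v2,v3) with parameter pair (α,β) if F(v0,v1;α) = F(v0,v2;α−β)·F(v0,v3;β). Assume: (i) F(x,y;α)·F(x,y;−α) = 1 for all x,y,α ∈ ℂ; (ii) for all v0,v1,v2,v3,α,β ∈ ℂ, the three-leg relation holds on (v0,v1,v2,v3) with (α,β) if and only if it holds on (v1,v2,v3,v0) with (β,α). Then for all x0,x1,x2,x3,x12,x31,x123 ∈ ℂ and all α1,α2,α3 ∈ ℂ: if the three-leg relation holds on (x0,x1,x12,x2) with (α1,α2), on (x0,x3,x31,x1) with (α3,α1), and on (x1,x12,x123,x31) with (α2,α3), then F(x1,x2;α2−α1) = F(x1,x123;α2−α3)·F(x1,x3;α3−α1). -/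
import Mathlib


/-- The tetrahedron property: for a quad-graph equation with multiplicative
three-leg form, the three-leg relations on three faces of the cube imply the
relation among the fields at the vertices `x1, x2, x3, x123` of the dashed
tetrahedron. -/
theorem threeLeg_tetrahedron_property
    (F : ℂ → ℂ → ℂ → ℂ)
    (hsym : ∀ x y α : ℂ, F x y α * F x y (-α) = 1)
    (hcenter : ∀ v0 v1 v2 v3 α β : ℂ,
      (F v0 v1 α = F v0 v2 (α - β) * F v0 v3 β) ↔
      (F v1 v2 β = F v1 v3 (β - α) * F v1 v0 α))
    (x0 x1 x2 x3 x12 x31 x123 α1 α2 α3 : ℂ)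
    (h12 : F x0 x1 α1 = F x0 x12 (α1 - α2) * F x0 x2 α2)
    (h31 : F x0 x3 α3 = F x0 x31 (α3 - α1) * F x0 x1 α1)
    (h123 : F x1 x12 α2 = F x1 x123 (α2 - α3) * F x1 x31 α3) :
    F x1 x2 (α2 - α1) = F x1 x123 (α2 - α3) * F x1 x3 (α3 - α1) := by
  have h1 := (hcenter x0 x1 x12 x2 α1 α2).mp h12
  -- h1 : F x1 x12 α2 = F x1 x2 (α2 - α1) * F x1 x0 α1
  have h2 := (hcenter x0 x3 x31 x1 α3 α1).mp h31
  have h3 := (hcenter x3 x31 x1 x0 α1 α3).mp h2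
  have h4 := (hcenter x31 x1 x0 x3 α3 α1).mp h3
  -- h4 : F x1 x0 α1 = F x1 x3 (α1 - α3) * F x1 x31 α3
  have hne31 : F x1 x31 α3 ≠ 0 :=
    left_ne_zero_of_mul_eq_one (hsym x1 x31 α3)
  have hinv : F x1 x3 (α1 - α3) * F x1 x3 (α3 - α1) = 1 := by
    have := hsym x1 x3 (α1 - α3)
    simpa [neg_sub] using this
  have key : F x1 x2 (α2 - α1) * (F x1 x3 (α1 - α3) * F x1 x31 α3)
      = F x1 x123 (α2 - α3) * F x1 x31 α3 := by
    rw [← h4, ← h1, h123]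
  have key2 : F x1 x2 (α2 - α1) * F x1 x3 (α1 - α3) = F x1 x123 (α2 - α3) := by
    rw [← mul_assoc] at key
    exact mul_right_cancel₀ hne31 key
  calc F x1 x2 (α2 - α1)
      = F x1 x2 (α2 - α1) * (F x1 x3 (α1 - α3) * F x1 x3 (α3 - α1)) := by
        rw [hinv, mul_one]
    _ = (F x1 x2 (α2 - α1) * F x1 x3 (α1 - α3)) * F x1 x3 (α3 - α1) := by ring
    _ = F x1 x123 (α2 - α3) * F x1 x3 (α3 - α1) := by rw [key2]
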